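/- (Pointwise multiplier identity (fdiu)). Let α < 0 < β be reals, δ ∈ ℝ, ψ₁ ∈ ℂ^{m₁×nz}, ψ₂ ∈ ℂ^{m₂×nz}, P ∈ ℝ^{m₁×m₂}, and set M := [[0, P],[Pᵀ, 0]], Ψ := diag(ψ₁, ψ₂), T := [[I_{nz}, −β⁻¹ I_{nz}],[−α I_{nz}, I_{nz}]], J := [I_{nz}; I_{nz}]. Then [I_{nz}; δ I_{nz}]* (Ψ T)* M (Ψ T) [I_{nz}; δ I_{nz}] = (1 − β⁻¹ δ)(δ − α) · (Ψ J)* M (Ψ J), where * denotes conjugate transpose. In particular, if (Ψ J)* M (Ψ J) is positive semidefinite and δ ∈ [α, β], then [I_{nz}; δ I_{nz}]* (Ψ T)* M (Ψ T) [I_{nz}; δ I_{nz}] is positive semidefinite. -/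

import Mathlib

open MeasureTheory Matrix

noncomputable section

namespace IQCPaper

/-- Membership in `L2e^p`: measurable and square integrable on every bounded interval. -/
def MemL2e (p : ℕ) (f : ℝ → Fin p → ℝ) : Prop :=
  Measurable f ∧ ∀ T : ℝ, 0 < T → IntegrableOn (fun t => ‖f t‖ ^ 2) (Set.Ioc 0 T) volume

/-- Membership in `L2^p`. -/
def MemL2 (p : ℕ) (f : ℝ → Fin p → ℝ) : Prop :=
  MemL2e p f ∧ IntegrableOn (fun t => ‖f t‖ ^ 2) (Set.Ioi 0) volume

/-- The `L2` norm on `[0,∞)`. -/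
def L2norm (p : ℕ) (f : ℝ → Fin p → ℝ) : ℝ :=
  Real.sqrt (∫ t in Set.Ioi (0 : ℝ), ‖f t‖ ^ 2)

/-- The filter trajectory: absolutely continuous solution of
`ξ' = A ξ + B u`, `ξ(0) = 0`, written in integral form. -/
def IsFilterTraj {k m : Type*} [Fintype k] [Fintype m]
    (A : Matrix k k ℝ) (B : Matrix k m ℝ)
    (u : ℝ → m → ℝ) (ξ : ℝ → k → ℝ) : Prop :=
  Continuous ξ ∧ ξ 0 = 0 ∧
    ∀ t : ℝ, 0 ≤ t → ξ t = ∫ s in (0 : ℝ)..t, (A.mulVec (ξ s) + B.mulVec (u s))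

/-- The KYP matrix. -/
def KYP {n m q : Type*} [Fintype n] [Fintype m] [Fintype q]
    (X : Matrix n n ℝ) (M : Matrix q q ℝ)
    (A : Matrix n n ℝ) (B : Matrix n m ℝ)
    (C : Matrix q n ℝ) (D : Matrix q m ℝ) : Matrix (n ⊕ m) (n ⊕ m) ℝ :=
  fromBlocks (Aᵀ * X + X * A + Cᵀ * M * C) (X * B + Cᵀ * M * D)
    (Bᵀ * X + Dᵀ * M * C) (Dᵀ * M * D)

/-- A real square matrix is Hurwitz if all its complex eigenvalues have negative real part. -/
def IsHurwitz {n : Type*} [Fintype n] [DecidableEq n] (A : Matrix n n ℝ) : Prop :=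
  ∀ μ ∈ spectrum ℂ (A.map Complex.ofReal), μ.re < 0

/-- Finite-horizon IQC with terminal cost matrix `Z`. -/
def FiniteHorizonIQC {k q : Type*} [Fintype k] [Fintype q] (nz nw : ℕ)
    (AΨ : Matrix k k ℝ) (BΨ : Matrix k (Fin nz ⊕ Fin nw) ℝ)
    (CΨ : Matrix q k ℝ) (DΨ : Matrix q (Fin nz ⊕ Fin nw) ℝ)
    (M : Matrix q q ℝ) (Z : Matrix k k ℝ)
    (Δ : (ℝ → Fin nz → ℝ) → (ℝ → Fin nw → ℝ)) : Prop :=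
  ∀ z : ℝ → Fin nz → ℝ, MemL2e nz z →
    ∀ ξ : ℝ → k → ℝ,
      IsFilterTraj AΨ BΨ (fun t => Sum.elim (z t) (Δ z t)) ξ →
      ∀ T : ℝ, 0 < T →
        0 ≤ (∫ t in (0 : ℝ)..T,
              (CΨ.mulVec (ξ t) + DΨ.mulVec (Sum.elim (z t) (Δ z t))) ⬝ᵥ
                M.mulVec (CΨ.mulVec (ξ t) + DΨ.mulVec (Sum.elim (z t) (Δ z t))))
            + (ξ T) ⬝ᵥ Z.mulVec (ξ T)

/-- Factorization identities for `(Z̃, M̃, C̃, D̃)`. -/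
def FactIds {k m q : Type*} [Fintype k] [Fintype m] [Fintype q]
    (AΨ : Matrix k k ℝ) (BΨ : Matrix k m ℝ) (CΨ : Matrix q k ℝ) (DΨ : Matrix q m ℝ)
    (M : Matrix q q ℝ) (Z' : Matrix k k ℝ) (M' : Matrix m m ℝ)
    (C' : Matrix m k ℝ) (D' : Matrix m m ℝ) : Prop :=
  Z'.IsSymm ∧ M'.IsSymm ∧
    AΨᵀ * Z' + Z' * AΨ + CΨᵀ * M * CΨ = C'ᵀ * M' * C' ∧
    Z' * BΨ + CΨᵀ * M * DΨ = C'ᵀ * M' * D' ∧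
    DΨᵀ * M * DΨ = D'ᵀ * M' * D'

/-- `(Z̃, M̃, C̃, D̃)` certifies a canonical factorization of `(AΨ, BΨ, CΨ, DΨ, M)`. -/
def CertifiesCanonical {k m q : Type*} [Fintype k] [Fintype m] [Fintype q]
    [DecidableEq k] [DecidableEq m]
    (AΨ : Matrix k k ℝ) (BΨ : Matrix k m ℝ) (CΨ : Matrix q k ℝ) (DΨ : Matrix q m ℝ)
    (M : Matrix q q ℝ) (Z' : Matrix k k ℝ) (M' : Matrix m m ℝ)
    (C' : Matrix m k ℝ) (D' : Matrix m m ℝ) : Prop :=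
  FactIds AΨ BΨ CΨ DΨ M Z' M' C' D' ∧ IsUnit D' ∧ IsHurwitz (AΨ - BΨ * D'⁻¹ * C')

/-- A causal operator. -/
def Causal (nz nw : ℕ) (Δ : (ℝ → Fin nz → ℝ) → (ℝ → Fin nw → ℝ)) : Prop :=
  ∀ z z' : ℝ → Fin nz → ℝ, ∀ T : ℝ, 0 < T →
    (∀ᵐ t ∂(volume.restrict (Set.Icc (0 : ℝ) T)), z t = z' t) →
    (∀ᵐ t ∂(volume.restrict (Set.Icc (0 : ℝ) T)), Δ z t = Δ z' t)

/-- A bounded operator from `L2^{nz}` to `L2^{nw}`. -/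
def BoundedOp (nz nw : ℕ) (Δ : (ℝ → Fin nz → ℝ) → (ℝ → Fin nw → ℝ)) : Prop :=
  ∃ c : ℝ, 0 ≤ c ∧ ∀ z, MemL2 nz z → MemL2 nw (Δ z) ∧ L2norm nw (Δ z) ≤ c * L2norm nz z


open scoped ComplexOrder

/-- The multiplier middle matrix `M = [[0, P], [Pᵀ, 0]]`, over ℂ. -/
def Mmid {m₁ m₂ : ℕ} (P : Matrix (Fin m₁) (Fin m₂) ℝ) :
    Matrix (Fin m₁ ⊕ Fin m₂) (Fin m₁ ⊕ Fin m₂) ℂ :=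
  fromBlocks 0 (P.map Complex.ofReal) ((Pᵀ).map Complex.ofReal) 0

/-- `Ψ = diag(ψ₁, ψ₂)`. -/
def PsiDiag {nz m₁ m₂ : ℕ} (ψ₁ : Matrix (Fin m₁) (Fin nz) ℂ)
    (ψ₂ : Matrix (Fin m₂) (Fin nz) ℂ) :
    Matrix (Fin m₁ ⊕ Fin m₂) (Fin nz ⊕ Fin nz) ℂ :=
  fromBlocks ψ₁ 0 0 ψ₂

/-- `T = [[I, −β⁻¹ I], [−α I, I]]`, over ℂ. -/
def Tmat (nz : ℕ) (α β : ℝ) : Matrix (Fin nz ⊕ Fin nz) (Fin nz ⊕ Fin nz) ℂ :=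
  fromBlocks 1 (-((β : ℂ)⁻¹) • 1) (-(α : ℂ) • 1) 1

/-- `J = [I; I]`, over ℂ. -/
def Jmat (nz : ℕ) : Matrix (Fin nz ⊕ Fin nz) (Fin nz) ℂ :=
  fromRows 1 1

/-- `[I; δ I]`, over ℂ. -/
def Jdelta (nz : ℕ) (δ : ℝ) : Matrix (Fin nz ⊕ Fin nz) (Fin nz) ℂ :=
  fromRows 1 ((δ : ℂ) • 1)



lemma Mmid_mul_fromRows {nz m₁ m₂ : ℕ} (P : Matrix (Fin m₁) (Fin m₂) ℝ)
    (A : Matrix (Fin m₁) (Fin nz) ℂ) (B : Matrix (Fin m₂) (Fin nz) ℂ) :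
    Mmid P * fromRows A B
      = fromRows (P.map Complex.ofReal * B) ((Pᵀ).map Complex.ofReal * A) := by
  rw [Mmid, fromBlocks_mul_fromRows]
  simp

lemma quad_eq {nz m₁ m₂ : ℕ} (ψ₁ : Matrix (Fin m₁) (Fin nz) ℂ)
    (ψ₂ : Matrix (Fin m₂) (Fin nz) ℂ) (P : Matrix (Fin m₁) (Fin m₂) ℝ) (a b : ℝ) :
    (fromRows ((a:ℂ) • ψ₁) ((b:ℂ) • ψ₂))ᴴ * Mmid P * fromRows ((a:ℂ) • ψ₁) ((b:ℂ) • ψ₂)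
      = ((a * b : ℝ) : ℂ) • ((fromRows ψ₁ ψ₂)ᴴ * Mmid P * fromRows ψ₁ ψ₂) := by
  rw [Matrix.mul_assoc, Matrix.mul_assoc, Mmid_mul_fromRows, Mmid_mul_fromRows,
    conjTranspose_fromRows_eq_fromCols_conjTranspose,
    conjTranspose_fromRows_eq_fromCols_conjTranspose,
    fromCols_mul_fromRows, fromCols_mul_fromRows]
  simp only [conjTranspose_smul, Complex.star_def, Complex.conj_ofReal, Matrix.smul_mul,
    Matrix.mul_smul, smul_smul, smul_add, Complex.ofReal_mul]
  rw [mul_comm ((b:ℂ)) ((a:ℂ))]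

lemma psi_T_Jdelta {nz m₁ m₂ : ℕ} (α β δ : ℝ)
    (ψ₁ : Matrix (Fin m₁) (Fin nz) ℂ) (ψ₂ : Matrix (Fin m₂) (Fin nz) ℂ) :
    PsiDiag ψ₁ ψ₂ * Tmat nz α β * Jdelta nz δ
      = fromRows (((1 - β⁻¹ * δ : ℝ) : ℂ) • ψ₁) (((δ - α : ℝ) : ℂ) • ψ₂) := by
  rw [PsiDiag, Tmat, Jdelta, Matrix.mul_assoc, fromBlocks_mul_fromRows, fromBlocks_mul_fromRows]
  simp only [Matrix.mul_add, Matrix.mul_neg, Matrix.mul_smul, Matrix.mul_one,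
    Matrix.zero_mul, add_zero, zero_add, smul_smul, smul_zero]
  push_cast
  have e1 : ψ₁ + ((δ:ℂ) * -((β:ℂ))⁻¹) • ψ₁ = (1 - ((β:ℂ))⁻¹ * (δ:ℂ)) • ψ₁ := by module
  have e2 : (-(α:ℂ)) • ψ₂ + (δ:ℂ) • ψ₂ = ((δ:ℂ) - (α:ℂ)) • ψ₂ := by module
  rw [e1, e2]

lemma psi_Jmat {nz m₁ m₂ : ℕ}
    (ψ₁ : Matrix (Fin m₁) (Fin nz) ℂ) (ψ₂ : Matrix (Fin m₂) (Fin nz) ℂ) :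
    PsiDiag ψ₁ ψ₂ * Jmat nz = fromRows ψ₁ ψ₂ := by
  rw [PsiDiag, Jmat, fromBlocks_mul_fromRows]
  simp

lemma posSemidef_real_smul {n : Type*} [Fintype n] {S : Matrix n n ℂ}
    (hS : S.PosSemidef) {c : ℝ} (hc : 0 ≤ c) : ((c : ℂ) • S).PosSemidef := by
  rw [posSemidef_iff_dotProduct_mulVec]
  constructor
  · unfold Matrix.IsHermitian
    rw [conjTranspose_smul, Complex.star_def, Complex.conj_ofReal, hS.1]
  · intro x
    have h := hS.dotProduct_mulVec_nonneg x
    rw [Matrix.smul_mulVec, dotProduct_smul, smul_eq_mul]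
    rw [Complex.le_def] at h ⊢
    constructor
    · simp only [Complex.zero_re, Complex.mul_re, Complex.ofReal_re, Complex.ofReal_im,
        zero_mul, sub_zero] at h ⊢
      exact mul_nonneg hc h.1
    · simp only [Complex.zero_im, Complex.mul_im, Complex.ofReal_re, Complex.ofReal_im,
        zero_mul, add_zero] at h ⊢
      rw [← h.2, mul_zero]

/-- Pointwise multiplier identity (fdiu). -/
theorem multiplier_identity_fdiu
    {nz m₁ m₂ : ℕ} (α β δ : ℝ) (hα : α < 0) (hβ : 0 < β)
    (ψ₁ : Matrix (Fin m₁) (Fin nz) ℂ) (ψ₂ : Matrix (Fin m₂) (Fin nz) ℂ)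
    (P : Matrix (Fin m₁) (Fin m₂) ℝ) :
    ((Jdelta nz δ)ᴴ * (PsiDiag ψ₁ ψ₂ * Tmat nz α β)ᴴ * Mmid P *
          (PsiDiag ψ₁ ψ₂ * Tmat nz α β) * Jdelta nz δ
        = (((1 - β⁻¹ * δ) * (δ - α) : ℝ) : ℂ) •
            ((PsiDiag ψ₁ ψ₂ * Jmat nz)ᴴ * Mmid P * (PsiDiag ψ₁ ψ₂ * Jmat nz)))
      ∧ (((PsiDiag ψ₁ ψ₂ * Jmat nz)ᴴ * Mmid P * (PsiDiag ψ₁ ψ₂ * Jmat nz)).PosSemidef →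
          α ≤ δ → δ ≤ β →
          ((Jdelta nz δ)ᴴ * (PsiDiag ψ₁ ψ₂ * Tmat nz α β)ᴴ * Mmid P *
            (PsiDiag ψ₁ ψ₂ * Tmat nz α β) * Jdelta nz δ).PosSemidef) := by
  have key : (Jdelta nz δ)ᴴ * (PsiDiag ψ₁ ψ₂ * Tmat nz α β)ᴴ * Mmid P *
          (PsiDiag ψ₁ ψ₂ * Tmat nz α β) * Jdelta nz δ
        = (((1 - β⁻¹ * δ) * (δ - α) : ℝ) : ℂ) •
            ((PsiDiag ψ₁ ψ₂ * Jmat nz)ᴴ * Mmid P * (PsiDiag ψ₁ ψ₂ * Jmat nz)) := by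
    rw [Matrix.mul_assoc ((Jdelta nz δ)ᴴ * (PsiDiag ψ₁ ψ₂ * Tmat nz α β)ᴴ * Mmid P),
      ← conjTranspose_mul (PsiDiag ψ₁ ψ₂ * Tmat nz α β) (Jdelta nz δ),
      psi_T_Jdelta α β δ ψ₁ ψ₂, psi_Jmat ψ₁ ψ₂, quad_eq]
  refine ⟨key, fun hpsd hαδ hδβ => ?_⟩
  rw [key]
  apply posSemidef_real_smul hpsd
  apply mul_nonneg
  · rw [sub_nonneg]
    calc β⁻¹ * δ ≤ β⁻¹ * β := mul_le_mul_of_nonneg_left hδβ (inv_pos.mpr hβ).le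
      _ = 1 := inv_mul_cancel₀ (ne_of_gt hβ)
  · linarith
end IQCPaper
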